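/- arXiv:1606.04203 — 3 statements merged into one kernel-verified Lean document; each statement's English description precedes it below -/
import Mathlib

section
/- (Error probability bounds for the SD-DSPRT.) For every sensor k and all thresholds A, B > 0: P₀(ζ^{(k)}_{T_sd^{(k)}} ≥ B) ≤ e^{−B} and P₁(ζ^{(k)}_{T_sd^{(k)}} ≤ −A) ≤ e^{−A}. -/
open MeasureTheory ProbabilityTheory

lemma aux_prod {Ω : Type*} [MeasurableSpace Ω] {ι : Type*} (P : Measure Ω)
    [IsProbabilityMeasure P]
    (g : ι → Ω → ℝ) (hgmeas : ∀ p, Measurable (g p))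
    (hindep : iIndepFun g P)
    (S : Finset ι) (hexp : ∀ p ∈ S, ∫ ω, Real.exp (g p ω) ∂P = 1) :
    Integrable (fun ω => ∏ p ∈ S, Real.exp (g p ω)) P ∧
      ∫ ω, ∏ p ∈ S, Real.exp (g p ω) ∂P = 1 := by
  classical
  induction S using Finset.induction_on with
  | empty => simp
  | @insert a S haS ih =>
    have hexpS : ∀ p ∈ S, ∫ ω, Real.exp (g p ω) ∂P = 1 := fun p hp =>
      hexp p (Finset.mem_insert_of_mem hp)
    obtain ⟨hint, hval⟩ := ih hexpS
    have hXmeas : Measurable fun ω => Real.exp (g a ω) :=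
      (Real.measurable_exp).comp (hgmeas a)
    have hXint : Integrable (fun ω => Real.exp (g a ω)) P := by
      by_contra h
      have h0 := integral_undef h
      rw [hexp a (Finset.mem_insert_self a S)] at h0
      norm_num at h0
    have hind : IndepFun (fun ω => Real.exp (g a ω))
        (fun ω => ∏ p ∈ S, Real.exp (g p ω)) P := by
      have h0 := hindep.indepFun_finset {a} S
        (Finset.disjoint_singleton_left.mpr haS) hgmeas
      have hφ : Measurable fun x : ({a} : Finset ι) → ℝ =>
          Real.exp (x ⟨a, Finset.mem_singleton_self a⟩) :=
        Real.measurable_exp.comp (measurable_pi_apply _)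
      have hψ : Measurable fun x : {y // y ∈ S} → ℝ =>
          ∏ p ∈ S.attach, Real.exp (x p) :=
        Finset.measurable_prod _ fun p _ => Real.measurable_exp.comp (measurable_pi_apply _)
      have h1 := h0.comp hφ hψ
      convert h1 using 1
      · funext ω; rfl
      funext ω
      exact (Finset.prod_attach S fun p => Real.exp (g p ω)).symm
    constructor
    · have := hind.integrable_mul hXint hint
      simpa [Finset.prod_insert haS, Pi.mul_def] using this
    · have := hind.integral_mul_eq_mul_integral hXint.aestronglyMeasurable hint.aestronglyMeasurable
      simp only [Pi.mul_apply] at this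
      rw [hexp a (Finset.mem_insert_self a S), hval] at this
      simpa [Finset.prod_insert haS] using this

lemma aux_meas {α : Type*} [MeasurableSpace α] (h : ℕ → α → ℝ) (hh : ∀ u, Measurable (h u))
    (A B : ℝ) (t : ℕ) :
    MeasurableSet {x | B ≤ h t x ∧ ∀ u, u < t → 1 ≤ u → h u x ∈ Set.Ioo (-A) B} := by
  rw [Set.setOf_and]
  refine (measurableSet_le measurable_const (hh t)).inter ?_
  have h1 : {x | ∀ u, u < t → 1 ≤ u → h u x ∈ Set.Ioo (-A) B} =
      ⋂ u : ℕ, {x | u < t → 1 ≤ u → h u x ∈ Set.Ioo (-A) B} := by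
    ext x; simp
  rw [h1]
  refine MeasurableSet.iInter fun u => ?_
  by_cases h2 : u < t ∧ 1 ≤ u
  · have h3 : {x | u < t → 1 ≤ u → h u x ∈ Set.Ioo (-A) B} = (h u) ⁻¹' Set.Ioo (-A) B := by
      ext x; simp [h2.1, h2.2]
    rw [h3]; exact (hh u) measurableSet_Ioo
  · have h3 : {x | u < t → 1 ≤ u → h u x ∈ Set.Ioo (-A) B} = Set.univ := by
      ext x
      simp only [Set.mem_setOf_eq, Set.mem_univ, iff_true]
      intro hut h1u; exact absurd ⟨hut, h1u⟩ h2
    rw [h3]; exact MeasurableSet.univ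

lemma aux_bound {Ω : Type*} [MeasurableSpace Ω] {ι : Type*} (P : Measure Ω)
    [IsProbabilityMeasure P]
    (g : ι → Ω → ℝ) (hgmeas : ∀ p, Measurable (g p))
    (hindep : iIndepFun g P)
    (F : ℕ → Finset ι) (hmono : Monotone F) (hF0 : F 0 = ∅)
    (hexp : ∀ n, ∀ p ∈ F n, ∫ ω, Real.exp (g p ω) ∂P = 1)
    (ξ : ℕ → Ω → ℝ) (hξ : ∀ t ω, ξ t ω = ∑ p ∈ F t, g p ω)
    (A B : ℝ) (hB : 0 < B)
    (τ : Ω → ℕ) (hτ : ∀ ω, τ ω = sInf {t | 1 ≤ t ∧ ξ t ω ∉ Set.Ioo (-A) B}) :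
    P {ω | B ≤ ξ (τ ω) ω} ≤ ENNReal.ofReal (Real.exp (-B)) := by
  classical
  set W : Finset ι → Ω → ℝ := fun S ω => ∏ p ∈ S, Real.exp (g p ω) with hW
  have hexpξ : ∀ t ω, Real.exp (ξ t ω) = W (F t) ω := fun t ω => by
    rw [hξ, Real.exp_sum]
  have hξmeas : ∀ t, Measurable (ξ t) := by
    intro t
    have h1 : ξ t = fun ω => ∑ p ∈ F t, g p ω := funext (hξ t)
    rw [h1]; exact Finset.measurable_sum _ fun p _ => hgmeas p
  set E : ℕ → Set Ω := fun t =>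
    {ω | 1 ≤ t ∧ B ≤ ξ t ω ∧ ∀ u, u < t → 1 ≤ u → ξ u ω ∈ Set.Ioo (-A) B} with hE
  have hEmeas : ∀ t, MeasurableSet (E t) := by
    intro t
    by_cases h1t : 1 ≤ t
    · have h1 : E t = {ω | B ≤ ξ t ω ∧ ∀ u, u < t → 1 ≤ u → ξ u ω ∈ Set.Ioo (-A) B} := by
        ext ω; simp [hE, h1t]
      rw [h1]; exact aux_meas ξ hξmeas A B t
    · have h1 : E t = ∅ := by
        ext ω; simp only [hE, Set.mem_setOf_eq, Set.mem_empty_iff_false, iff_false]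
        rintro ⟨h, -⟩; exact h1t h
      rw [h1]; exact MeasurableSet.empty
  have hξ0 : ∀ ω, ξ 0 ω = 0 := fun ω => by rw [hξ, hF0]; simp
  have htarget : {ω | B ≤ ξ (τ ω) ω} = ⋃ t, E t := by
    ext ω
    simp only [Set.mem_setOf_eq, Set.mem_iUnion]
    constructor
    · intro hω
      rcases Set.eq_empty_or_nonempty {t | 1 ≤ t ∧ ξ t ω ∉ Set.Ioo (-A) B} with hempty | hne
      · exfalso
        have h0 : τ ω = 0 := by rw [hτ, hempty]; exact Nat.sInf_empty
        rw [h0, hξ0] at hω; linarith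
      · have hmem : τ ω ∈ {t | 1 ≤ t ∧ ξ t ω ∉ Set.Ioo (-A) B} := by
          rw [hτ]; exact Nat.sInf_mem hne
        refine ⟨τ ω, hmem.1, hω, fun u hu h1u => ?_⟩
        by_contra hc
        have h2 : u ∈ {t | 1 ≤ t ∧ ξ t ω ∉ Set.Ioo (-A) B} := ⟨h1u, hc⟩
        have h3 := Nat.sInf_le h2
        rw [← hτ] at h3
        omega
    · rintro ⟨t, h1t, hBt, hmin⟩
      have htS : t ∈ {t | 1 ≤ t ∧ ξ t ω ∉ Set.Ioo (-A) B} :=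
        ⟨h1t, fun hmem => absurd hmem.2 (not_lt.mpr hBt)⟩
      have hτt : τ ω = t := by
        rw [hτ]
        refine le_antisymm (Nat.sInf_le htS) ?_
        by_contra hc
        push_neg at hc
        have hmemInf := Nat.sInf_mem (⟨t, htS⟩ :
          Set.Nonempty {t | 1 ≤ t ∧ ξ t ω ∉ Set.Ioo (-A) B})
        exact hmemInf.2 (hmin _ hc hmemInf.1)
      rw [hτt]; exact hBt
  have hdisj : Pairwise (Function.onFun Disjoint E) := by
    have hkey : ∀ t t', t < t' → Disjoint (E t) (E t') := by
      intro t t' h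
      rw [Set.disjoint_left]
      rintro ω ⟨h1t, hBt, -⟩ ⟨-, -, hmin'⟩
      exact absurd (hmin' t h h1t).2 (not_lt.mpr hBt)
    intro t t' hne
    rcases lt_or_gt_of_ne hne with h | h
    · exact hkey t t' h
    · exact (hkey t' t h).symm
  have hmain : ∀ n : ℕ, ∑ t ∈ Finset.Icc 1 n, P (E t) ≤ ENNReal.ofReal (Real.exp (-B)) := by
    intro n
    have hWn := aux_prod P g hgmeas hindep (F n) (hexp n)
    have hWmeas : ∀ S : Finset ι, Measurable (W S) :=
      fun S => Finset.measurable_prod _ fun p _ => Real.measurable_exp.comp (hgmeas p)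
    have hWnonneg : ∀ S ω, 0 ≤ W S ω := fun S ω =>
      Finset.prod_nonneg fun p _ => (Real.exp_pos _).le
    have key : ∀ t ∈ Finset.Icc 1 n,
        Real.exp B * (P (E t)).toReal ≤ ∫ ω in E t, W (F n) ω ∂P := by
      intro t ht
      rw [Finset.mem_Icc] at ht
      have hsub : F t ⊆ F n := hmono ht.2
      have hWt := aux_prod P g hgmeas hindep (F t) (fun p hp => hexp n p (hsub hp))
      have hWd := aux_prod P g hgmeas hindep (F n \ F t)
        (fun p hp => hexp n p (Finset.sdiff_subset hp))
      have stepA : Real.exp B * (P (E t)).toReal ≤ ∫ ω in E t, W (F t) ω ∂P := by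
        refine setIntegral_ge_of_const_le_real (hEmeas t) (measure_ne_top P _) ?_
          hWt.1.integrableOn
        intro ω hω
        rw [← hexpξ]
        exact Real.exp_le_exp.mpr hω.2.1
      have hsplit : ∀ ω, W (F n) ω = W (F t) ω * W (F n \ F t) ω := by
        intro ω
        simp only [hW]
        rw [mul_comm, ← Finset.prod_sdiff hsub]
      set Y : Ω → ℝ := (E t).indicator (W (F t)) with hY
      have hYint : Integrable Y P := hWt.1.indicator (hEmeas t)
      have hind : IndepFun Y (W (F n \ F t)) P := by
        have h0 := hindep.indepFun_finset (F t) (F n \ F t) Finset.disjoint_sdiff hgmeas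
        set σf : ℕ → ({x // x ∈ F t} → ℝ) → ℝ := fun u x =>
          ∑ p ∈ (F t).attach, if (p : ι) ∈ F u then x p else 0 with hσf
        have hσfmeas : ∀ u, Measurable (σf u) := by
          intro u
          refine Finset.measurable_sum _ fun p _ => ?_
          by_cases hp : (p : ι) ∈ F u
          · simpa [hp] using measurable_pi_apply p
          · simpa [hp] using (measurable_const : Measurable fun _ : {x // x ∈ F t} → ℝ => (0:ℝ))
        have hσf_eq : ∀ u, u ≤ t → ∀ ω, σf u (fun p => g p ω) = ξ u ω := by
          intro u hu ω
          rw [hσf]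
          simp only
          rw [Finset.sum_attach (F t) (fun q => if q ∈ F u then g q ω else 0),
            Finset.sum_ite_mem, Finset.inter_eq_right.mpr (hmono hu), hξ]
        set C : Set ({x // x ∈ F t} → ℝ) :=
          {x | B ≤ σf t x ∧ ∀ u, u < t → 1 ≤ u → σf u x ∈ Set.Ioo (-A) B} with hC
        have hCmeas : MeasurableSet C := aux_meas σf hσfmeas A B t
        set φ : ({x // x ∈ F t} → ℝ) → ℝ := C.indicator (fun x => Real.exp (σf t x)) with hφ
        have hφmeas : Measurable φ :=
          (Real.measurable_exp.comp (hσfmeas t)).indicator hCmeas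
        set ψ : ({x // x ∈ F n \ F t} → ℝ) → ℝ :=
          fun x => ∏ p ∈ (F n \ F t).attach, Real.exp (x p) with hψ
        have hψmeas : Measurable ψ :=
          Finset.measurable_prod _ fun p _ => Real.measurable_exp.comp (measurable_pi_apply _)
        have h1 := h0.comp hφmeas hψmeas
        have hmemC : ∀ ω, ((fun p : {x // x ∈ F t} => g p ω) ∈ C) ↔ ω ∈ E t := by
          intro ω
          simp only [hC, Set.mem_setOf_eq, hE]
          rw [hσf_eq t le_rfl ω]
          constructor
          · rintro ⟨h1', h2'⟩
            exact ⟨ht.1, h1', fun u hu h1u => by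
              rw [← hσf_eq u hu.le ω]; exact h2' u hu h1u⟩
          · rintro ⟨-, h1', h2'⟩
            exact ⟨h1', fun u hu h1u => by
              rw [hσf_eq u hu.le ω]; exact h2' u hu h1u⟩
        have hφcomp : (φ ∘ fun ω (p : {x // x ∈ F t}) => g p ω) = Y := by
          funext ω
          simp only [Function.comp_apply, hY]
          rw [hφ]
          by_cases hω : ω ∈ E t
          · rw [Set.indicator_of_mem ((hmemC ω).mpr hω), Set.indicator_of_mem hω,
              hσf_eq t le_rfl ω, hexpξ]
          · rw [Set.indicator_of_notMem (fun hc => hω ((hmemC ω).mp hc)),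
              Set.indicator_of_notMem hω]
        have hψcomp : (ψ ∘ fun ω (p : {x // x ∈ F n \ F t}) => g p ω) = W (F n \ F t) := by
          funext ω
          simp only [Function.comp_apply, hψ, hW]
          exact Finset.prod_attach (F n \ F t) fun p => Real.exp (g p ω)
        rw [hφcomp, hψcomp] at h1
        exact h1
      have stepB : ∫ ω in E t, W (F n) ω ∂P = ∫ ω in E t, W (F t) ω ∂P := by
        rw [← integral_indicator (hEmeas t), ← integral_indicator (hEmeas t)]
        have h1 : (E t).indicator (W (F n)) = fun ω => Y ω * W (F n \ F t) ω := by
          funext ω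
          by_cases hω : ω ∈ E t
          · simp [Set.indicator_of_mem hω, hY, hsplit ω]
          · simp [Set.indicator_of_notMem hω, hY]
        have h2 : ∫ ω, Y ω * W (F n \ F t) ω ∂P
            = (∫ ω, Y ω ∂P) * ∫ ω, W (F n \ F t) ω ∂P :=
          hind.integral_fun_mul_eq_mul_integral hYint.aestronglyMeasurable hWd.1.aestronglyMeasurable
        rw [h1, h2, hWd.2, mul_one]
      rw [stepB]; exact stepA
    have hsum1 : ∑ t ∈ Finset.Icc 1 n, ∫ ω in E t, W (F n) ω ∂P ≤ 1 := by
      rw [← integral_biUnion_finset (Finset.Icc 1 n) (fun t _ => hEmeas t)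
        (fun t _ t' _ hne => hdisj hne) (fun t _ => hWn.1.integrableOn)]
      calc ∫ ω in ⋃ t ∈ Finset.Icc 1 n, E t, W (F n) ω ∂P
          ≤ ∫ ω, W (F n) ω ∂P :=
            setIntegral_le_integral hWn.1 (ae_of_all _ fun ω => hWnonneg _ ω)
        _ = 1 := hWn.2
    have hsum2 : Real.exp B * ∑ t ∈ Finset.Icc 1 n, (P (E t)).toReal ≤ 1 := by
      rw [Finset.mul_sum]
      calc ∑ t ∈ Finset.Icc 1 n, Real.exp B * (P (E t)).toReal
          ≤ ∑ t ∈ Finset.Icc 1 n, ∫ ω in E t, W (F n) ω ∂P := Finset.sum_le_sum key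
        _ ≤ 1 := hsum1
    have hsum3 : ∑ t ∈ Finset.Icc 1 n, (P (E t)).toReal ≤ Real.exp (-B) := by
      rw [Real.exp_neg, ← one_div, le_div_iff₀ (Real.exp_pos B)]
      linarith [hsum2]
    calc ∑ t ∈ Finset.Icc 1 n, P (E t)
        = ENNReal.ofReal (∑ t ∈ Finset.Icc 1 n, (P (E t)).toReal) := by
          rw [ENNReal.ofReal_sum_of_nonneg (fun t _ => ENNReal.toReal_nonneg)]
          exact Finset.sum_congr rfl fun t _ => (ENNReal.ofReal_toReal (measure_ne_top P _)).symm
      _ ≤ ENNReal.ofReal (Real.exp (-B)) := ENNReal.ofReal_le_ofReal hsum3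
  rw [htarget]
  calc P (⋃ t, E t) = ∑' t, P (E t) := measure_iUnion hdisj hEmeas
    _ ≤ ENNReal.ofReal (Real.exp (-B)) := by
      rw [ENNReal.tsum_eq_iSup_sum]
      refine iSup_le fun sf => ?_
      have hsub : sf.filter (fun t => 1 ≤ t) ⊆ Finset.Icc 1 (sf.sup id) := by
        intro t htm
        simp only [Finset.mem_filter] at htm
        exact Finset.mem_Icc.mpr ⟨htm.2, Finset.le_sup (f := id) htm.1⟩
      calc ∑ t ∈ sf, P (E t) = ∑ t ∈ sf.filter (fun t => 1 ≤ t), P (E t) := by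
            refine (Finset.sum_subset (Finset.filter_subset _ sf) ?_).symm
            intro t hts htf
            have ht0 : ¬ 1 ≤ t := by
              intro h; exact htf (Finset.mem_filter.mpr ⟨hts, h⟩)
            have hempty : E t = ∅ := by
              ext ω; simp only [hE, Set.mem_setOf_eq, Set.mem_empty_iff_false, iff_false]
              rintro ⟨h, -⟩; exact ht0 h
            rw [hempty]; simp
        _ ≤ ∑ t ∈ Finset.Icc 1 (sf.sup id), P (E t) := Finset.sum_le_sum_of_subset hsub
        _ ≤ _ := hmain _

/-- Error probability bounds for the SD-DSPRT: for every sensor `k` and thresholds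
`A, B > 0`, `P₀(ζ⁽ᵏ⁾_{T_sd} ≥ B) ≤ e^{−B}` and `P₁(ζ⁽ᵏ⁾_{T_sd} ≤ −A) ≤ e^{−A}`. -/
theorem stmt_5
    {Ω : Type*} [MeasurableSpace Ω]
    (P0 P1 : Measure Ω) [IsProbabilityMeasure P0] [IsProbabilityMeasure P1]
    (K : ℕ) (hK : 1 ≤ K)
    (s : Fin K → ℕ → Ω → ℝ)
    (hmeas : ∀ k t, Measurable (s k t))
    -- convention: zero sample at time 0
    (hzero : ∀ k ω, s k 0 ω = 0)
    -- mutual independence under each measure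
    (hindep0 : iIndepFun (fun (p : Fin K × ℕ) ω => s p.1 p.2 ω) P0)
    (hindep1 : iIndepFun (fun (p : Fin K × ℕ) ω => s p.1 p.2 ω) P1)
    -- the sₜ⁽ᵏ⁾ are log-likelihood ratios
    (hexp0 : ∀ k t, 1 ≤ t → ∫ ω, Real.exp (s k t ω) ∂P0 = 1)
    (hexp1 : ∀ k t, 1 ≤ t → ∫ ω, Real.exp (-(s k t ω)) ∂P1 = 1)
    -- connected communication graph and propagation delays (graph distances)
    (G : SimpleGraph (Fin K)) (hconn : G.Connected)
    (ν : Fin K → Fin K → ℕ)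
    (hν : ∀ ℓ k, ν ℓ k = if ℓ = k then 1 else G.dist ℓ k)
    -- sample-dissemination statistic
    (ζ : Fin K → ℕ → Ω → ℝ)
    (hζ : ∀ k t ω, ζ k t ω = ∑ j ∈ Finset.Icc 1 t, ∑ ℓ : Fin K, s ℓ (j + 1 - ν ℓ k) ω)
    -- the SD-DSPRT stopping time
    (T : Fin K → ℝ → ℝ → Ω → ℕ)
    (hT : ∀ k A B ω, T k A B ω = sInf {t : ℕ | 1 ≤ t ∧ ζ k t ω ∉ Set.Ioo (-A) B})
    -- almost sure finiteness under both measures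
    (hfin0 : ∀ (k : Fin K) (A B : ℝ), 0 < A → 0 < B →
      ∀ᵐ ω ∂P0, ∃ t, 1 ≤ t ∧ ζ k t ω ∉ Set.Ioo (-A) B)
    (hfin1 : ∀ (k : Fin K) (A B : ℝ), 0 < A → 0 < B →
      ∀ᵐ ω ∂P1, ∃ t, 1 ≤ t ∧ ζ k t ω ∉ Set.Ioo (-A) B) :
    ∀ (k : Fin K) (A B : ℝ), 0 < A → 0 < B →
      P0 {ω | B ≤ ζ k (T k A B ω) ω} ≤ ENNReal.ofReal (Real.exp (-B)) ∧
      P1 {ω | ζ k (T k A B ω) ω ≤ -A} ≤ ENNReal.ofReal (Real.exp (-A)) := by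
  intro k A B hA hB
  classical
  have hν1 : ∀ ℓ : Fin K, 1 ≤ ν ℓ k := by
    intro ℓ
    rw [hν]
    by_cases h : ℓ = k
    · rw [if_pos h]
    · rw [if_neg h]
      have := hconn.pos_dist_of_ne h
      omega
  set F : ℕ → Finset (Fin K × ℕ) := fun t =>
    Finset.univ.biUnion fun ℓ : Fin K =>
      (Finset.Icc 1 (t + 1 - ν ℓ k)).image fun m => (ℓ, m) with hF
  have hFmem : ∀ (p : Fin K × ℕ) (t : ℕ), p ∈ F t ↔ 1 ≤ p.2 ∧ p.2 ≤ t + 1 - ν p.1 k := by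
    rintro ⟨ℓ, m⟩ t
    simp only [hF, Finset.mem_biUnion, Finset.mem_univ, true_and, Finset.mem_image,
      Finset.mem_Icc, Prod.mk.injEq]
    constructor
    · rintro ⟨ℓ', m', ⟨h1, h2⟩, rfl, rfl⟩; exact ⟨h1, h2⟩
    · rintro ⟨h1, h2⟩; exact ⟨ℓ, m, ⟨h1, h2⟩, rfl, rfl⟩
  have hmono : Monotone F := by
    intro t t' htt p hp
    rw [hFmem] at hp ⊢
    exact ⟨hp.1, hp.2.trans (by omega)⟩
  have hF0 : F 0 = ∅ := by
    rw [Finset.eq_empty_iff_forall_notMem]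
    intro p hp
    rw [hFmem] at hp
    have := hν1 p.1
    omega
  have hresum : ∀ (f : ℕ → ℝ), f 0 = 0 → ∀ (v t : ℕ), 1 ≤ v →
      ∑ j ∈ Finset.Icc 1 t, f (j + 1 - v) = ∑ m ∈ Finset.Icc 1 (t + 1 - v), f m := by
    intro f hf0 v t hv
    have hstep : ∑ j ∈ Finset.Icc 1 t, f (j + 1 - v) = ∑ j ∈ Finset.Icc v t, f (j + 1 - v) := by
      refine (Finset.sum_subset ?_ ?_).symm
      · intro j hj; rw [Finset.mem_Icc] at hj ⊢; omega
      · intro j hj hj'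
        rw [Finset.mem_Icc] at hj
        rw [Finset.mem_Icc] at hj'
        have h0 : j + 1 - v = 0 := by omega
        rw [h0, hf0]
    rw [hstep]
    refine Finset.sum_nbij' (fun j => j + 1 - v) (fun m => m + v - 1) ?_ ?_ ?_ ?_ ?_
    · intro a ha
      simp only [Finset.mem_Icc] at ha
      show a + 1 - v ∈ Finset.Icc 1 (t + 1 - v)
      rw [Finset.mem_Icc]; omega
    · intro a ha
      simp only [Finset.mem_Icc] at ha
      show a + v - 1 ∈ Finset.Icc v t
      rw [Finset.mem_Icc]; omega
    · intro a ha
      simp only [Finset.mem_Icc] at ha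
      show a + 1 - v + v - 1 = a
      omega
    · intro a ha
      simp only [Finset.mem_Icc] at ha
      show a + v - 1 + 1 - v = a
      omega
    · intro a ha; rfl
  have hζsum : ∀ t ω, ζ k t ω = ∑ p ∈ F t, s p.1 p.2 ω := by
    intro t ω
    have hdisjF : (↑(Finset.univ : Finset (Fin K)) : Set (Fin K)).PairwiseDisjoint
        (fun ℓ : Fin K => (Finset.Icc 1 (t + 1 - ν ℓ k)).image fun m => (ℓ, m)) := by
      intro ℓ _ ℓ' _ hne
      simp only [Function.onFun]
      rw [Finset.disjoint_left]
      rintro p hp hp'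
      simp only [Finset.mem_image] at hp hp'
      obtain ⟨m, _, rfl⟩ := hp
      obtain ⟨m', _, h⟩ := hp'
      exact hne ((Prod.mk.injEq _ _ _ _).mp h).1.symm
    have e1 : F t = Finset.univ.biUnion
        (fun ℓ : Fin K => (Finset.Icc 1 (t + 1 - ν ℓ k)).image fun m => (ℓ, m)) := rfl
    have hRHS : ∑ p ∈ F t, s p.1 p.2 ω
        = ∑ ℓ : Fin K, ∑ m ∈ Finset.Icc 1 (t + 1 - ν ℓ k), s ℓ m ω := by
      rw [e1, Finset.sum_biUnion hdisjF]
      refine Finset.sum_congr rfl fun ℓ _ => ?_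
      refine Finset.sum_image ?_
      intro x _ y _ h
      exact ((Prod.mk.injEq _ _ _ _).mp h).2
    rw [hRHS, hζ, Finset.sum_comm]
    exact Finset.sum_congr rfl fun ℓ _ =>
      hresum (fun m => s ℓ m ω) (hzero ℓ ω) (ν ℓ k) t (hν1 ℓ)
  constructor
  · refine aux_bound P0 (fun p ω => s p.1 p.2 ω) (fun p => hmeas p.1 p.2) ?hindep
      F hmono hF0 ?hexp
      (ζ k) (fun t ω => hζsum t ω) A B hB (T k A B) (fun ω => hT k A B ω)
    case hindep => exact hindep0
    case hexp => exact fun n p hp => hexp0 p.1 p.2 ((hFmem p n).mp hp).1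
  · have hind1' : iIndepFun
        (fun (p : Fin K × ℕ) ω => -(s p.1 p.2 ω)) P1 := by
      have h1 := hindep1.comp (fun _ => fun x : ℝ => -x) (fun _ => measurable_neg)
      exact h1
    have hIoo : ∀ x : ℝ, x ∈ Set.Ioo (-A) B ↔ -x ∈ Set.Ioo (-B) A := by
      intro x
      simp only [Set.mem_Ioo]
      constructor <;> rintro ⟨h1, h2⟩ <;> constructor <;> linarith
    have hb : P1 {ω | A ≤ -(ζ k (T k A B ω) ω)} ≤ ENNReal.ofReal (Real.exp (-A)) := by
      refine aux_bound P1 (fun p ω => -(s p.1 p.2 ω)) (fun p => (hmeas p.1 p.2).neg) ?hindep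
        F hmono hF0 ?hexp
        (fun t ω => -(ζ k t ω))
        (fun t ω => by
          show -(ζ k t ω) = ∑ p ∈ F t, -(s p.1 p.2 ω)
          rw [hζsum]
          exact (Finset.sum_neg_distrib _).symm)
        B A hA (T k A B) ?htau
      case hindep => exact hind1'
      case hexp => exact fun n p hp => hexp1 p.1 p.2 ((hFmem p n).mp hp).1
      case htau =>
        intro ω
        rw [hT]
        congr 1
        ext t
        simp only [Set.mem_setOf_eq]
        rw [hIoo (ζ k t ω)]
    have hset : {ω | ζ k (T k A B ω) ω ≤ -A} = {ω | A ≤ -(ζ k (T k A B ω) ω)} := by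
      ext ω
      simp only [Set.mem_setOf_eq]
      constructor <;> intro h <;> linarith
    rw [hset]
    exact hb
end

section
/- Let μ > 0 and c > 0, let X be a real random variable with the Gaussian law N(μ, 1), and set s := μX − μ²/2. Then E[exp(c|s|)] = e^{(c+1)c μ²/2} Φ((c + 1/2)μ) + e^{(c−1)c μ²/2} Φ((c − 1/2)μ), where Φ denotes the cumulative distribution function of the standard Gaussian law N(0,1). -/
open MeasureTheory ProbabilityTheory

open Real

lemma complete_sq (b m x : ℝ) :
    rexp (b * x) * gaussianPDFReal m 1 x
      = rexp (b * m + b ^ 2 / 2) * gaussianPDFReal (m + b) 1 x := by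
  simp only [gaussianPDFReal, NNReal.coe_one, mul_one]
  rw [show (√(2 * π))⁻¹ * rexp (-(x - m) ^ 2 / 2) = rexp (-(x - m) ^ 2 / 2) * (√(2 * π))⁻¹ by ring,
    show (√(2 * π))⁻¹ * rexp (-(x - (m + b)) ^ 2 / 2) = rexp (-(x - (m + b)) ^ 2 / 2) * (√(2 * π))⁻¹ by ring,
    ← mul_assoc, ← mul_assoc, ← Real.exp_add, ← Real.exp_add]
  congr 2
  ring

lemma integrable_exp_mul_pdf (b m : ℝ) :
    Integrable (fun x ↦ rexp (b * x) * gaussianPDFReal m 1 x) := by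
  simp only [complete_sq]
  exact (integrable_gaussianPDFReal (m + b) 1).const_mul _

lemma iic_pdf (m a : ℝ) :
    ∫ x in Set.Iic a, gaussianPDFReal m 1 x
      = ((gaussianReal 0 1) (Set.Iic (a - m))).toReal := by
  have h1 : gaussianReal m 1 (Set.Iic a)
      = ENNReal.ofReal (∫ x in Set.Iic a, gaussianPDFReal m 1 x) :=
    gaussianReal_apply_eq_integral m one_ne_zero _
  have h2 : gaussianReal m 1 (Set.Iic a) = gaussianReal 0 1 (Set.Iic (a - m)) := by
    have := gaussianReal_map_add_const (μ := 0) (v := 1) m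
    rw [zero_add] at this
    rw [← this, Measure.map_apply (by fun_prop) measurableSet_Iic]
    congr 1
    ext x
    simp [sub_eq_add_neg, le_sub_iff_add_le]
  rw [h2] at h1
  rw [← ENNReal.toReal_ofReal (integral_nonneg fun x ↦ gaussianPDFReal_nonneg m 1 x), ← h1]

lemma ioi_pdf (m a : ℝ) :
    ∫ x in Set.Ioi a, gaussianPDFReal m 1 x
      = ((gaussianReal 0 1) (Set.Iic (m - a))).toReal := by
  have hpt : ∀ x : ℝ, gaussianPDFReal m 1 x = gaussianPDFReal (-m) 1 (-x) := by
    intro x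
    simp only [gaussianPDFReal]
    congr 2
    ring
  calc ∫ x in Set.Ioi a, gaussianPDFReal m 1 x
      = ∫ x in Set.Ioi a, gaussianPDFReal (-m) 1 (-x) := by
        exact setIntegral_congr_fun measurableSet_Ioi fun x _ ↦ hpt x
    _ = ∫ x in Set.Iic (-a), gaussianPDFReal (-m) 1 x :=
        integral_comp_neg_Ioi a _
    _ = ((gaussianReal 0 1) (Set.Iic (m - a))).toReal := by
        rw [iic_pdf]; ring_nf


/-- Exponential absolute moment of the Gaussian log-likelihood ratio: if
`X ~ N(μ, 1)` with `μ > 0` and `s = μX − μ²/2`, then for every `c > 0`,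
`E[exp(c|s|)] = e^{(c+1)cμ²/2} Φ((c+1/2)μ) + e^{(c−1)cμ²/2} Φ((c−1/2)μ)`,
where `Φ` is the standard Gaussian CDF. -/
theorem stmt_12
    {Ω : Type*} [MeasurableSpace Ω]
    (P : Measure Ω) [IsProbabilityMeasure P]
    (μ c : ℝ) (hμ : 0 < μ) (hc : 0 < c)
    (X : Ω → ℝ) (hXmeas : Measurable X)
    (hX : Measure.map X P = gaussianReal μ 1)
    (Φ : ℝ → ℝ)
    (hΦ : ∀ x, Φ x = ((gaussianReal 0 1) (Set.Iic x)).toReal) :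
    ∫ ω, Real.exp (c * |μ * X ω - μ ^ 2 / 2|) ∂P
      = Real.exp ((c + 1) * c * μ ^ 2 / 2) * Φ ((c + 1 / 2) * μ)
        + Real.exp ((c - 1) * c * μ ^ 2 / 2) * Φ ((c - 1 / 2) * μ) := by
  set g : ℝ → ℝ := fun x ↦ rexp (c * |μ * x - μ ^ 2 / 2|) with hg
  have hgmeas : Measurable g := by fun_prop
  set h : ℝ → ℝ := fun x ↦ gaussianPDFReal μ 1 x * g x with hh
  -- step 1: map to gaussianReal
  have step1 : ∫ ω, rexp (c * |μ * X ω - μ ^ 2 / 2|) ∂P = ∫ x, g x ∂(gaussianReal μ 1) := by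
    rw [← hX, integral_map hXmeas.aemeasurable hgmeas.aestronglyMeasurable]
  -- step 2: withDensity
  have step2 : ∫ x, g x ∂(gaussianReal μ 1) = ∫ x, h x := by
    rw [gaussianReal_of_var_ne_zero μ one_ne_zero]
    have hfm : Measurable fun x ↦ (gaussianPDFReal μ 1 x).toNNReal :=
      (measurable_gaussianPDFReal μ 1).real_toNNReal
    have : (volume.withDensity (gaussianPDF μ 1))
        = volume.withDensity (fun x ↦ ((gaussianPDFReal μ 1 x).toNNReal : ENNReal)) := rfl
    rw [this, integral_withDensity_eq_integral_smul hfm]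
    refine integral_congr_ae (Filter.Eventually.of_forall fun x ↦ ?_)
    simp only [hh, NNReal.smul_def, Real.coe_toNNReal _ (gaussianPDFReal_nonneg μ 1 x), smul_eq_mul]
  -- integrability of h
  have hInt : Integrable h := by
    have hF : Integrable (fun x ↦
        rexp (-(c * μ ^ 2 / 2)) * (rexp (c * μ * x) * gaussianPDFReal μ 1 x)
          + rexp (c * μ ^ 2 / 2) * (rexp (-(c * μ) * x) * gaussianPDFReal μ 1 x)) :=
      ((integrable_exp_mul_pdf (c * μ) μ).const_mul _).add
        ((integrable_exp_mul_pdf (-(c * μ)) μ).const_mul _)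
    refine hF.mono' ?_ (Filter.Eventually.of_forall fun x ↦ ?_)
    · exact ((measurable_gaussianPDFReal μ 1).mul hgmeas).aestronglyMeasurable
    · have hp := gaussianPDFReal_nonneg μ 1 x
      have h1 : g x ≤ rexp (c * (μ * x - μ ^ 2 / 2)) + rexp (-(c * (μ * x - μ ^ 2 / 2))) := by
        rcases abs_cases (μ * x - μ ^ 2 / 2) with ⟨he, _⟩ | ⟨he, _⟩ <;>
            rw [hg] <;> simp only <;> rw [he]
        · linarith [Real.exp_pos (-(c * (μ * x - μ ^ 2 / 2)))]
        · rw [mul_neg]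
          linarith [Real.exp_pos (c * (μ * x - μ ^ 2 / 2))]
      have e1 : rexp (c * (μ * x - μ ^ 2 / 2))
          = rexp (-(c * μ ^ 2 / 2)) * rexp (c * μ * x) := by rw [← Real.exp_add]; ring_nf
      have e2 : rexp (-(c * (μ * x - μ ^ 2 / 2)))
          = rexp (c * μ ^ 2 / 2) * rexp (-(c * μ) * x) := by rw [← Real.exp_add]; ring_nf
      rw [Real.norm_eq_abs, abs_of_nonneg (mul_nonneg hp (Real.exp_nonneg _))]
      calc gaussianPDFReal μ 1 x * g x
          ≤ gaussianPDFReal μ 1 x * (rexp (c * (μ * x - μ ^ 2 / 2))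
              + rexp (-(c * (μ * x - μ ^ 2 / 2)))) := by nlinarith
        _ = _ := by rw [e1, e2]; ring
  -- left piece
  have hleft : ∫ x in Set.Iic (μ / 2), h x
      = rexp ((c - 1) * c * μ ^ 2 / 2) * Φ ((c - 1 / 2) * μ) := by
    have hpt : ∀ x ∈ Set.Iic (μ / 2),
        h x = rexp ((c - 1) * c * μ ^ 2 / 2 - ((-(c * μ)) * μ + (-(c * μ)) ^ 2 / 2))
          * (rexp ((-(c * μ)) * x) * gaussianPDFReal μ 1 x) := by
      intro x hx
      have hx' : x ≤ μ / 2 := hx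
      rw [hh]; simp only
      rw [hg]; simp only
      rw [abs_of_nonpos (by nlinarith)]
      conv_rhs => rw [← mul_assoc, ← Real.exp_add]
      rw [show (c - 1) * c * μ ^ 2 / 2 - (-(c * μ) * μ + (-(c * μ)) ^ 2 / 2) + -(c * μ) * x
          = c * -(μ * x - μ ^ 2 / 2) by ring]
      ring
    rw [setIntegral_congr_fun measurableSet_Iic hpt, integral_const_mul _ _]
    simp_rw [complete_sq (-(c * μ)) μ]
    rw [integral_const_mul _ _, iic_pdf]
    rw [show μ / 2 - (μ + -(c * μ)) = (c - 1 / 2) * μ by ring, ← hΦ, ← mul_assoc,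
      ← Real.exp_add]
    congr 2
    ring
  -- right piece
  have hright : ∫ x in Set.Ioi (μ / 2), h x
      = rexp ((c + 1) * c * μ ^ 2 / 2) * Φ ((c + 1 / 2) * μ) := by
    have hpt : ∀ x ∈ Set.Ioi (μ / 2),
        h x = rexp ((c + 1) * c * μ ^ 2 / 2 - ((c * μ) * μ + (c * μ) ^ 2 / 2))
          * (rexp ((c * μ) * x) * gaussianPDFReal μ 1 x) := by
      intro x hx
      have hx' : μ / 2 < x := hx
      rw [hh]; simp only
      rw [hg]; simp only
      rw [abs_of_nonneg (by nlinarith)]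
      conv_rhs => rw [← mul_assoc, ← Real.exp_add]
      rw [show (c + 1) * c * μ ^ 2 / 2 - (c * μ * μ + (c * μ) ^ 2 / 2) + c * μ * x
          = c * (μ * x - μ ^ 2 / 2) by ring]
      ring
    rw [setIntegral_congr_fun measurableSet_Ioi hpt, integral_const_mul _ _]
    simp_rw [complete_sq (c * μ) μ]
    rw [integral_const_mul _ _, ioi_pdf]
    rw [show μ + c * μ - μ / 2 = (c + 1 / 2) * μ by ring, ← hΦ, ← mul_assoc, ← Real.exp_add]
    congr 2
    ring
  rw [step1, step2, ← intervalIntegral.integral_Iic_add_Ioi (b := μ / 2) hInt.integrableOn hInt.integrableOn,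
    hleft, hright, add_comm]
end

section
/- (Sample dissemination reaches every sensor along shortest paths.) Let G be a connected undirected graph on the vertex set {1,…,K}, let d(ℓ,k) denote graph distance, and set ν_{ℓ→k} := d(ℓ,k) for ℓ ≠ k and ν_{k→k} := 1. Define, for each sensor k, sets of indexed samples M_t^{(k)}, V_t^{(k)} ⊆ {1,…,K} × {1,2,…} recursively by M_0^{(k)} := ∅, M_{−1}^{(k)} := ∅, V_t^{(k)} := {(k,t)} ∪ (M_{t−1}^{(k)} \ (M_{t−2}^{(k)} ∪ {(k,t−1)})), and M_t^{(k)} := M_{t−1}^{(k)} ∪ {(k,t)} ∪ ⋃_{ℓ ∈ N_k} V_t^{(ℓ)}, where N_k is the set of neighbours of k in G. Then for every sensor k and every t ≥ 1, M_t^{(k)} = {(ℓ, j) : ℓ ∈ {1,…,K}, 1 ≤ j ≤ t − ν_{ℓ→k} + 1}. -/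
/-- Auxiliary: if `dist m k ≥ 2` there is a neighbour `ℓ` of `k` distinct from `m`
with `dist m ℓ = dist m k - 1`. -/
lemma stmt_15_aux {K : ℕ} (G : SimpleGraph (Fin K)) (hconn : G.Connected) (m k : Fin K)
    (h2 : 2 ≤ G.dist m k) : ∃ ℓ, G.Adj k ℓ ∧ m ≠ ℓ ∧ G.dist m ℓ = G.dist m k - 1 := by
  have hmk : m ≠ k := by rintro rfl; rw [SimpleGraph.dist_self] at h2; omega
  obtain ⟨p, hp⟩ := (hconn k m).exists_walk_length_eq_dist
  obtain ⟨ℓ, hadj, q, rfl⟩ := SimpleGraph.Walk.exists_eq_cons_of_ne (Ne.symm hmk) p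
  have hcomm : G.dist k m = G.dist m k := SimpleGraph.dist_comm
  have hq : q.length = G.dist m k - 1 := by
    rw [SimpleGraph.Walk.length_cons, hcomm] at hp; omega
  have hle : G.dist m ℓ ≤ G.dist m k - 1 := by
    have := SimpleGraph.dist_le q
    have hc : G.dist m ℓ = G.dist ℓ m := SimpleGraph.dist_comm
    omega
  have h1 : G.dist ℓ k = 1 := SimpleGraph.dist_eq_one_iff_adj.mpr hadj.symm
  have htri := hconn.dist_triangle (u := m) (v := ℓ) (w := k)
  have heq : G.dist m ℓ = G.dist m k - 1 := by omega
  have hne : m ≠ ℓ := by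
    rintro rfl; rw [SimpleGraph.dist_self] at heq; omega
  exact ⟨ℓ, hadj, hne, heq⟩

/-- Sample dissemination reaches every sensor along shortest paths: with
`ν_{ℓ→k}` the graph distance (and `ν_{k→k} := 1`), the recursively defined stored
sets satisfy `M_t⁽ᵏ⁾ = {(ℓ, j) : 1 ≤ j ≤ t − ν_{ℓ→k} + 1}` for all `t ≥ 1`. -/
theorem stmt_15
    (K : ℕ) (hK : 1 ≤ K)
    (G : SimpleGraph (Fin K)) (hconn : G.Connected)
    (ν : Fin K → Fin K → ℕ)
    (hν : ∀ ℓ k, ν ℓ k = if ℓ = k then 1 else G.dist ℓ k)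
    (M V : Fin K → ℕ → Set (Fin K × ℕ))
    (hM0 : ∀ k, M k 0 = ∅)
    -- broadcast sets: V_t⁽ᵏ⁾ = {(k,t)} ∪ (M_{t−1}⁽ᵏ⁾ \ (M_{t−2}⁽ᵏ⁾ ∪ {(k,t−1)}))
    (hV : ∀ (k : Fin K) (t : ℕ), 1 ≤ t →
      V k t = {(k, t)} ∪ (M k (t - 1) \ (M k (t - 2) ∪ {(k, t - 1)})))
    -- storage update: M_t⁽ᵏ⁾ = M_{t−1}⁽ᵏ⁾ ∪ {(k,t)} ∪ ⋃_{ℓ ∈ N_k} V_t⁽ˡ⁾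
    (hMrec : ∀ (k : Fin K) (t : ℕ), 1 ≤ t →
      M k t = M k (t - 1) ∪ {(k, t)} ∪ ⋃ ℓ ∈ G.neighborSet k, V ℓ t) :
    ∀ (k : Fin K) (t : ℕ), 1 ≤ t →
      M k t = {p : Fin K × ℕ | 1 ≤ p.2 ∧ p.2 + ν p.1 k ≤ t + 1} := by
  -- basic facts about ν
  have hν1 : ∀ m k, 1 ≤ ν m k := by
    intro m k; rw [hν]
    split
    · exact le_refl 1
    · exact hconn.pos_dist_of_ne (by assumption)
  have hνadj : ∀ m k, G.Adj k m → ν m k = 1 := by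
    intro m k h; rw [hν]
    split
    · rfl
    · exact SimpleGraph.dist_eq_one_iff_adj.mpr h.symm
  have hνtri : ∀ m k ℓ, G.Adj k ℓ → ν m k ≤ ν m ℓ + 1 := by
    intro m k ℓ h
    rcases eq_or_ne m k with rfl | hmk
    · rw [hν]; simp
    rcases eq_or_ne m ℓ with rfl | hml
    · rw [hνadj m k h]; omega
    rw [hν m k, hν m ℓ, if_neg hmk, if_neg hml]
    have htri := hconn.dist_triangle (u := m) (v := ℓ) (w := k)
    have h1 : G.dist ℓ k = 1 := SimpleGraph.dist_eq_one_iff_adj.mpr h.symm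
    omega
  have hνex : ∀ m k, 2 ≤ ν m k → ∃ ℓ, G.Adj k ℓ ∧ m ≠ ℓ ∧ ν m ℓ = ν m k - 1 := by
    intro m k h2
    have hmk : m ≠ k := by rintro rfl; rw [hν] at h2; simp at h2
    rw [hν, if_neg hmk] at h2
    obtain ⟨ℓ, hadj, hne, heq⟩ := stmt_15_aux G hconn m k h2
    refine ⟨ℓ, hadj, hne, ?_⟩
    rw [hν m ℓ, if_neg hne, hν m k, if_neg hmk, heq]
  -- main claim, for all t ≥ 0, by strong induction
  have key : ∀ t k, M k t = {p : Fin K × ℕ | 1 ≤ p.2 ∧ p.2 + ν p.1 k ≤ t + 1} := by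
    intro t
    induction t using Nat.strong_induction_on with
    | _ t ih =>
      intro k
      match t with
      | 0 =>
        rw [hM0]
        ext ⟨m, j⟩
        simp only [Set.mem_empty_iff_false, Set.mem_setOf_eq, false_iff, not_and]
        intro hj
        have := hν1 m k
        omega
      | n + 1 =>
        rw [hMrec k (n + 1) (by omega)]
        have hsub1 : n + 1 - 1 = n := by omega
        have hsub2 : n + 1 - 2 = n - 1 := by omega
        rw [hsub1]
        ext ⟨m, j⟩
        simp only [Set.mem_union, Set.mem_singleton_iff, Set.mem_iUnion,
          SimpleGraph.mem_neighborSet, Set.mem_setOf_eq, Prod.mk.injEq]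
        constructor
        · rintro ((hM | ⟨rfl, rfl⟩) | ⟨ℓ, hadj, hVmem⟩)
          · rw [ih n (by omega)] at hM
            obtain ⟨hj, hle⟩ := hM
            have hle' : j + ν m k ≤ n + 1 := hle
            exact ⟨hj, by omega⟩
          · exact ⟨by omega, by rw [hν]; simp⟩
          · rw [hV ℓ (n + 1) (by omega), hsub1, hsub2] at hVmem
            rcases hVmem with hVmem | hVmem
            · rw [Set.mem_singleton_iff] at hVmem
              obtain ⟨rfl, rfl⟩ := Prod.mk.injEq .. ▸ hVmem
              have h1 : ν m k = 1 := hνadj m k hadj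
              exact ⟨by omega, by omega⟩
            · obtain ⟨hMn, _⟩ := hVmem
              rw [ih n (by omega)] at hMn
              obtain ⟨hj, hle⟩ := hMn
              have hle' : j + ν m ℓ ≤ n + 1 := hle
              have := hνtri m k ℓ hadj
              exact ⟨hj, by omega⟩
        · rintro ⟨hj, hle⟩
          rcases le_or_gt (j + ν m k) (n + 1) with hcase | hcase
          · left; left
            rw [ih n (by omega)]
            exact ⟨hj, hcase⟩
          · have heq : j + ν m k = n + 2 := by omega
            rcases eq_or_lt_of_le (hν1 m k) with h1 | h2
            · -- ν m k = 1, so j = n + 1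
              have hj' : j = n + 1 := by omega
              rcases eq_or_ne m k with rfl | hmk
              · left; right; exact ⟨rfl, hj'⟩
              · have hadj : G.Adj m k := by
                  rw [hν, if_neg hmk] at h1
                  exact SimpleGraph.dist_eq_one_iff_adj.mp h1.symm
                right
                refine ⟨m, hadj.symm, ?_⟩
                rw [hV m (n + 1) (by omega), hsub1, hsub2]
                left
                rw [Set.mem_singleton_iff, hj']
            · -- ν m k ≥ 2
              obtain ⟨ℓ, hadj, hmℓ, hνℓ⟩ := hνex m k (by omega)
              have hjℓ : j + ν m ℓ = n + 1 := by omega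
              have hn1 : 1 ≤ n := by
                have := hν1 m ℓ; omega
              right
              refine ⟨ℓ, hadj, ?_⟩
              rw [hV ℓ (n + 1) (by omega), hsub1, hsub2]
              right
              constructor
              · rw [ih n (by omega)]
                exact ⟨hj, show j + ν m ℓ ≤ n + 1 by omega⟩
              · rintro (hmem | hmem)
                · rw [ih (n - 1) (by omega)] at hmem
                  have hle' : j + ν m ℓ ≤ (n - 1) + 1 := hmem.2
                  omega
                · rw [Set.mem_singleton_iff] at hmem
                  obtain ⟨h1, h2⟩ := Prod.mk.injEq .. ▸ hmem
                  exact hmℓ h1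
  intro k t _
  exact key t k
end
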